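/- Let k be a field of characteristic 0 and d ≥ 2. The apolar ideal det_d^⊥ ⊆ k[y_{1,1},…,y_{d,d}] of the generic d×d determinant det_d is generated by the following quadrics: (1) y_{i,j}² for all 1 ≤ i,j ≤ d; (2) y_{i,j₁} y_{i,j₂} for all i and j₁ ≠ j₂ (products of two entries from the same row); (3) y_{i₁,j} y_{i₂,j} for all j and i₁ ≠ i₂ (products of two entries from the same column); and (4) y_{i,j} y_{k,l} + y_{i,l} y_{k,j} for all i ≠ k, j ≠ l (permanents of 2×2 submatrices of Y = (y_{i,j})). -/

import Mathlib

open MvPolynomial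

/-- The generic d×d determinant, a form of degree `d` in the `d²` variables `x_{i,j}`. -/
noncomputable def detd (k : Type*) [CommRing k] (d : ℕ) : MvPolynomial (Fin d × Fin d) k :=
  Matrix.det (Matrix.of fun i j : Fin d => X (i, j))

/-- The apolarity action: `diffAction θ F` is the result `θ ∘ F` of applying the
constant-coefficient differential operator obtained from `θ` by substituting
`y_{i,j} ↦ ∂/∂x_{i,j}` to the polynomial `F`. -/
noncomputable def diffAction {k : Type*} [CommSemiring k] {σ : Type*}
    (θ F : MvPolynomial σ k) : MvPolynomial σ k :=
  ∑ a ∈ θ.support, ∑ b ∈ F.support,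
    monomial (b - a) (θ.coeff a * F.coeff b * ∏ i ∈ a.support, ((b i).descFactorial (a i) : k))

set_option linter.unusedSectionVars false
set_option maxHeartbeats 1000000

section basic

variable {k : Type*} [CommSemiring k] {σ : Type*} [Fintype σ] [DecidableEq σ]

/-- product of descending factorials -/
def dN (a b : σ →₀ ℕ) : ℕ := ∏ p : σ, (b p).descFactorial (a p)

lemma prod_support_eq_dN (a b : σ →₀ ℕ) :
    (∏ i ∈ a.support, ((b i).descFactorial (a i) : k)) = (dN a b : k) := by
  have hN : dN a b = ∏ i ∈ a.support, (b i).descFactorial (a i) :=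
    (Finset.prod_subset (Finset.subset_univ _)
      (fun p _ hp => by simp [Finsupp.notMem_support_iff.mp hp])).symm
  rw [hN, Nat.cast_prod]

lemma dN_eq_zero_of_not_le {a b : σ →₀ ℕ} (h : ¬ a ≤ b) : dN a b = 0 := by
  rw [Finsupp.le_iff] at h
  push_neg at h
  obtain ⟨p, hp, hlt⟩ := h
  have : (b p).descFactorial (a p) = 0 := Nat.descFactorial_eq_zero_iff_lt.mpr (by omega)
  exact Finset.prod_eq_zero (Finset.mem_univ p) this

lemma dN_eq_one {a b : σ →₀ ℕ} (hab : a ≤ b) (hb : ∀ p, b p ≤ 1) : dN a b = 1 := by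
  refine Finset.prod_eq_one fun p _ => ?_
  have h1 := hab p
  have h2 := hb p
  interval_cases h : b p <;> interval_cases h' : a p <;> simp

lemma coeff_diffAction (θ F : MvPolynomial σ k) (w : σ →₀ ℕ) :
    coeff w (diffAction θ F) =
      ∑ a ∈ θ.support, θ.coeff a * F.coeff (w + a) * (dN a (w + a) : k) := by
  rw [diffAction]
  rw [coeff_sum]
  refine Finset.sum_congr rfl fun a _ => ?_
  rw [coeff_sum]
  simp only [coeff_monomial, prod_support_eq_dN]
  rw [Finset.sum_eq_single (w + a)]
  · rw [if_pos (by simp)]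
  · intro b _ hb
    split_ifs with h
    · -- b - a = w but b ≠ w + a, so ¬ a ≤ b, so dN a b = 0
      have hna : ¬ a ≤ b := fun hle => hb (by rw [← h, tsub_add_cancel_of_le hle])
      rw [dN_eq_zero_of_not_le hna]
      simp
    · rfl
  · intro h
    rw [MvPolynomial.notMem_support_iff.mp h]
    simp

end basic

section linear

variable {k : Type*} [CommSemiring k] {σ : Type*} [Fintype σ] [DecidableEq σ]

lemma sum_support_subset_eq {p : MvPolynomial σ k} {s : Finset (σ →₀ ℕ)} (hs : p.support ⊆ s)
    (g : (σ →₀ ℕ) → k → k) (hg : ∀ a, g a 0 = 0) :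
    ∑ a ∈ p.support, g a (coeff a p) = ∑ a ∈ s, g a (coeff a p) :=
  Finset.sum_subset hs fun a _ ha => by rw [MvPolynomial.notMem_support_iff.mp ha, hg]

lemma diffAction_add_left (θ θ' F : MvPolynomial σ k) :
    diffAction (θ + θ') F = diffAction θ F + diffAction θ' F := by
  ext w
  rw [coeff_add, coeff_diffAction, coeff_diffAction, coeff_diffAction]
  set g : (σ →₀ ℕ) → k → k := fun a ca => ca * F.coeff (w + a) * (dN a (w + a) : k) with hgdef
  have hg : ∀ a, g a 0 = 0 := fun a => by simp [hgdef]
  rw [sum_support_subset_eq (MvPolynomial.support_add (p := θ) (q := θ')) g hg,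
    sum_support_subset_eq (Finset.subset_union_left (s₂ := θ'.support)) g hg,
    sum_support_subset_eq (Finset.subset_union_right (s₁ := θ.support)) g hg,
    ← Finset.sum_add_distrib]
  refine Finset.sum_congr rfl fun a _ => ?_
  simp only [hgdef, coeff_add]
  ring

lemma diffAction_smul_left (c : k) (θ F : MvPolynomial σ k) :
    diffAction (c • θ) F = c • diffAction θ F := by
  ext w
  rw [MvPolynomial.coeff_smul, coeff_diffAction, coeff_diffAction]
  set g : (σ →₀ ℕ) → k → k := fun a ca => ca * F.coeff (w + a) * (dN a (w + a) : k) with hgdef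
  have hg : ∀ a, g a 0 = 0 := fun a => by simp [hgdef]
  rw [sum_support_subset_eq (MvPolynomial.support_smul (a := c) (f := θ)) g hg, smul_eq_mul,
    Finset.mul_sum]
  refine Finset.sum_congr rfl fun a _ => ?_
  rw [MvPolynomial.coeff_smul, smul_eq_mul]
  ring

lemma diffAction_zero_left (F : MvPolynomial σ k) : diffAction (0 : MvPolynomial σ k) F = 0 := by
  ext w; rw [coeff_diffAction]; simp

lemma diffAction_zero_right (θ : MvPolynomial σ k) : diffAction θ (0 : MvPolynomial σ k) = 0 := by
  ext w; rw [coeff_diffAction]; simp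

lemma diffAction_add_right (θ F G : MvPolynomial σ k) :
    diffAction θ (F + G) = diffAction θ F + diffAction θ G := by
  ext w
  rw [coeff_add, coeff_diffAction, coeff_diffAction, coeff_diffAction, ← Finset.sum_add_distrib]
  refine Finset.sum_congr rfl fun a _ => ?_
  rw [coeff_add]
  ring

/-- `diffAction · F` as a linear map. -/
noncomputable def dAL (F : MvPolynomial σ k) : MvPolynomial σ k →ₗ[k] MvPolynomial σ k where
  toFun θ := diffAction θ F
  map_add' θ θ' := diffAction_add_left θ θ' F
  map_smul' c θ := diffAction_smul_left c θ F

@[simp] lemma dAL_apply (F θ : MvPolynomial σ k) : dAL F θ = diffAction θ F := rfl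

lemma coeff_diffAction_monomial (a : σ →₀ ℕ) (c : k) (F : MvPolynomial σ k) (w : σ →₀ ℕ) :
    coeff w (diffAction (monomial a c) F) = c * F.coeff (w + a) * (dN a (w + a) : k) := by
  classical
  by_cases hc : c = 0
  · subst hc
    rw [(monomial a).map_zero, diffAction_zero_left]
    simp
  · rw [coeff_diffAction, MvPolynomial.support_monomial, if_neg hc, Finset.sum_singleton,
      MvPolynomial.coeff_monomial, if_pos rfl]

lemma descF_key : ∀ (l n m : ℕ),
    (n + l + m).descFactorial m * (n + l).descFactorial l = (n + l + m).descFactorial (l + m)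
  | 0, n, m => by simp
  | l + 1, n, m => by
    have h1 : n + (l + 1) + m = n + 1 + l + m := by omega
    have h2 : n + (l + 1) = n + 1 + l := by omega
    rw [h1, h2, Nat.descFactorial_succ]
    have h3 : n + 1 + l - l = n + 1 := by omega
    have h4 : l + 1 + m = (l + m) + 1 := by omega
    rw [h3, h4, Nat.descFactorial_succ]
    have h5 : n + 1 + l + m - (l + m) = n + 1 := by omega
    rw [h5]
    calc (n + 1 + l + m).descFactorial m * ((n + 1) * (n + 1 + l).descFactorial l)
        = (n + 1) * ((n + 1 + l + m).descFactorial m * (n + 1 + l).descFactorial l) := by ring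
      _ = (n + 1) * (n + 1 + l + m).descFactorial (l + m) := by rw [descF_key l (n+1) m]

lemma dN_mul (a a' w : σ →₀ ℕ) :
    dN a' (w + a + a') * dN a (w + a) = dN (a + a') (w + a + a') := by
  unfold dN
  rw [← Finset.prod_mul_distrib]
  refine Finset.prod_congr rfl fun p _ => ?_
  simp only [Finsupp.add_apply]
  exact descF_key (a p) (w p) (a' p)

lemma diffAction_mul (θ η F : MvPolynomial σ k) :
    diffAction (θ * η) F = diffAction θ (diffAction η F) := by
  induction θ using MvPolynomial.induction_on' with
  | add p q hp hq => rw [add_mul, diffAction_add_left, diffAction_add_left, hp, hq]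
  | monomial a c =>
    induction η using MvPolynomial.induction_on' with
    | add p q hp hq =>
      rw [mul_add, diffAction_add_left, diffAction_add_left, hp, hq, diffAction_add_right]
    | monomial a' c' =>
      ext w
      rw [MvPolynomial.monomial_mul, coeff_diffAction_monomial, coeff_diffAction_monomial,
        coeff_diffAction_monomial, ← add_assoc, ← dN_mul]
      push_cast
      ring

end linear

section det

open Equiv

variable {k : Type*} [CommRing k] {d : ℕ}

/-- exponent of the monomial of `det` corresponding to a permutation -/
noncomputable def permMon (σ : Equiv.Perm (Fin d)) : (Fin d × Fin d) →₀ ℕ :=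
  ∑ j : Fin d, Finsupp.single (σ j, j) 1

lemma permMon_apply (σ : Equiv.Perm (Fin d)) (x y : Fin d) :
    permMon σ (x, y) = if σ y = x then 1 else 0 := by
  classical
  rw [permMon, Finset.sum_apply']
  rw [Finset.sum_eq_single y]
  · rw [Finsupp.single_apply]
    by_cases h : σ y = x
    · rw [if_pos (by simp [h]), if_pos h]
    · rw [if_neg (by simp [h]), if_neg h]
  · intro j _ hj
    rw [Finsupp.single_apply, if_neg (by simp [hj])]
  · intro h
    exact absurd (Finset.mem_univ y) h

lemma permMon_le_one (σ : Equiv.Perm (Fin d)) (p : Fin d × Fin d) : permMon σ p ≤ 1 := by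
  obtain ⟨x, y⟩ := p
  rw [permMon_apply]
  split_ifs <;> omega

lemma permMon_injective : Function.Injective (permMon (d := d)) := by
  intro σ τ h
  refine Equiv.ext fun y => ?_
  have := DFunLike.congr_fun h (σ y, y)
  rw [permMon_apply, permMon_apply, if_pos rfl] at this
  by_cases hh : τ y = σ y
  · exact hh.symm
  · rw [if_neg hh] at this; omega

lemma prod_X_eq_monomial' {σ : Type*} {ι : Type*} (s : Finset ι) (f : ι → σ) :
    (∏ i ∈ s, (X (f i) : MvPolynomial σ k)) = monomial (∑ i ∈ s, Finsupp.single (f i) 1) 1 := by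
  classical
  induction s using Finset.induction_on with
  | empty => simp
  | insert _ _ hni ih =>
    rw [Finset.prod_insert hni, Finset.sum_insert hni, ih, X, MvPolynomial.monomial_mul, one_mul]

lemma detd_eq : detd k d = ∑ σ : Equiv.Perm (Fin d), monomial (permMon σ) ((Equiv.Perm.sign σ : ℤ) : k) := by
  rw [detd, Matrix.det_apply]
  refine Finset.sum_congr rfl fun σ _ => ?_
  have hprod : (∏ i : Fin d, Matrix.of (fun i j : Fin d => (X (i, j) : MvPolynomial (Fin d × Fin d) k)) (σ i) i)
      = monomial (permMon σ) 1 := by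
    simp only [Matrix.of_apply]
    rw [permMon]
    exact prod_X_eq_monomial' Finset.univ (fun j => (σ j, j))
  rw [hprod, MvPolynomial.smul_monomial]
  congr 1
  simp [Units.smul_def, zsmul_eq_mul]

lemma coeff_detd (b : (Fin d × Fin d) →₀ ℕ) :
    coeff b (detd k d) =
      ∑ σ : Equiv.Perm (Fin d), if permMon σ = b then ((Equiv.Perm.sign σ : ℤ) : k) else 0 := by
  classical
  rw [detd_eq, coeff_sum]
  exact Finset.sum_congr rfl fun σ _ => by rw [MvPolynomial.coeff_monomial]

lemma coeff_detd_of_ne (b : (Fin d × Fin d) →₀ ℕ) (h : ∀ σ : Equiv.Perm (Fin d), permMon σ ≠ b) :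
    coeff b (detd k d) = 0 := by
  rw [coeff_detd]
  exact Finset.sum_eq_zero fun σ _ => if_neg (h σ)

lemma exists_perm_of_coeff_ne (b : (Fin d × Fin d) →₀ ℕ) (h : coeff b (detd k d) ≠ 0) :
    ∃ σ : Equiv.Perm (Fin d), permMon σ = b := by
  by_contra hc
  push_neg at hc
  exact h (coeff_detd_of_ne b hc)

lemma coeff_detd_permMon (σ : Equiv.Perm (Fin d)) :
    coeff (permMon σ) (detd k d) = ((Equiv.Perm.sign σ : ℤ) : k) := by
  classical
  rw [coeff_detd, Finset.sum_eq_single σ]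
  · rw [if_pos rfl]
  · intro τ _ hτ
    exact if_neg fun hh => hτ (permMon_injective hh)
  · intro h
    exact absurd (Finset.mem_univ σ) h

end det

section sums

variable {d : ℕ}

/-- sum of a row of an exponent matrix -/
def rowSum (u : (Fin d × Fin d) →₀ ℕ) (i : Fin d) : ℕ := ∑ y : Fin d, u (i, y)

/-- sum of a column of an exponent matrix -/
def colSum (u : (Fin d × Fin d) →₀ ℕ) (j : Fin d) : ℕ := ∑ x : Fin d, u (x, j)

lemma rowSum_add (u v : (Fin d × Fin d) →₀ ℕ) (i : Fin d) :
    rowSum (u + v) i = rowSum u i + rowSum v i := by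
  simp [rowSum, Finset.sum_add_distrib]

lemma colSum_add (u v : (Fin d × Fin d) →₀ ℕ) (j : Fin d) :
    colSum (u + v) j = colSum u j + colSum v j := by
  simp [colSum, Finset.sum_add_distrib]

lemma rowSum_permMon (σ : Equiv.Perm (Fin d)) (i : Fin d) : rowSum (permMon σ) i = 1 := by
  classical
  rw [rowSum]
  simp only [permMon_apply]
  rw [Finset.sum_eq_single (σ.symm i)]
  · rw [if_pos (σ.apply_symm_apply i)]
  · intro y _ hy
    rw [if_neg fun hh => hy (by rw [← hh]; exact (σ.symm_apply_apply y).symm)]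
  · intro h; exact absurd (Finset.mem_univ _) h

lemma colSum_permMon (σ : Equiv.Perm (Fin d)) (j : Fin d) : colSum (permMon σ) j = 1 := by
  classical
  rw [colSum]
  simp only [permMon_apply]
  rw [Finset.sum_eq_single (σ j)]
  · rw [if_pos rfl]
  · intro x _ hx; rw [if_neg fun hh => hx hh.symm]
  · intro h; exact absurd (Finset.mem_univ _) h

/-- exponent of a partial-permutation monomial given by row and column enumerations -/
noncomputable def Mexp {e : ℕ} (r c : Fin e → Fin d) : (Fin d × Fin d) →₀ ℕ :=
  ∑ m : Fin e, Finsupp.single (r m, c m) 1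

lemma Mexp_apply {e : ℕ} {r c : Fin e → Fin d} (hr : Function.Injective r)
    (p : Fin d × Fin d) :
    Mexp r c p = if ∃ m, (r m, c m) = p then 1 else 0 := by
  classical
  rw [Mexp, Finset.sum_apply']
  by_cases h : ∃ m, (r m, c m) = p
  · obtain ⟨m0, hm0⟩ := h
    rw [Finset.sum_eq_single m0]
    · rw [Finsupp.single_apply, if_pos hm0, if_pos ⟨m0, hm0⟩]
    · intro m _ hm
      rw [Finsupp.single_apply, if_neg]
      intro hh
      exact hm (hr (congrArg Prod.fst (hh.trans hm0.symm)))
    · intro h; exact absurd (Finset.mem_univ _) h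
  · rw [if_neg h]
    refine Finset.sum_eq_zero fun m _ => ?_
    rw [Finsupp.single_apply, if_neg fun hh => h ⟨m, hh⟩]

lemma Mexp_le_one {e : ℕ} {r c : Fin e → Fin d} (hr : Function.Injective r)
    (p : Fin d × Fin d) : Mexp r c p ≤ 1 := by
  rw [Mexp_apply hr]
  split_ifs <;> omega

lemma rowSum_Mexp {e : ℕ} {r c : Fin e → Fin d} (hr : Function.Injective r) (i : Fin d) :
    rowSum (Mexp r c) i = if ∃ m, r m = i then 1 else 0 := by
  classical
  have hswap : rowSum (Mexp r c) i = ∑ m : Fin e, ∑ y : Fin d, (Finsupp.single (r m, c m) 1 : (Fin d × Fin d) →₀ ℕ) (i, y) := by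
    rw [rowSum, Finset.sum_comm]
    refine Finset.sum_congr rfl fun y _ => ?_
    rw [Mexp, Finset.sum_apply']
  rw [hswap]
  have hinner : ∀ m : Fin e, (∑ y : Fin d, (Finsupp.single (r m, c m) 1 : (Fin d × Fin d) →₀ ℕ) (i, y)) = if r m = i then 1 else 0 := by
    intro m
    rw [Finset.sum_eq_single (c m)]
    · rw [Finsupp.single_apply]
      by_cases h : r m = i
      · rw [if_pos (by rw [h]), if_pos h]
      · rw [if_neg (by simp [h]), if_neg h]
    · intro y _ hy
      rw [Finsupp.single_apply, if_neg (by simp [Prod.ext_iff]; intro _ h; exact absurd h.symm hy)]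
    · intro h; exact absurd (Finset.mem_univ _) h
  simp only [hinner]
  by_cases h : ∃ m, r m = i
  · obtain ⟨m0, hm0⟩ := h
    rw [Finset.sum_eq_single m0]
    · rw [if_pos hm0, if_pos ⟨m0, hm0⟩]
    · intro m _ hm
      rw [if_neg fun hh => hm (hr (hh.trans hm0.symm))]
    · intro h; exact absurd (Finset.mem_univ _) h
  · rw [if_neg h]
    refine Finset.sum_eq_zero fun m _ => ?_
    rw [if_neg fun hh => h ⟨m, hh⟩]

lemma colSum_Mexp {e : ℕ} {r c : Fin e → Fin d} (hc : Function.Injective c) (j : Fin d) :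
    colSum (Mexp r c) j = if ∃ m, c m = j then 1 else 0 := by
  classical
  have hswap : colSum (Mexp r c) j = ∑ m : Fin e, ∑ x : Fin d, (Finsupp.single (r m, c m) 1 : (Fin d × Fin d) →₀ ℕ) (x, j) := by
    rw [colSum, Finset.sum_comm]
    refine Finset.sum_congr rfl fun x _ => ?_
    rw [Mexp, Finset.sum_apply']
  rw [hswap]
  have hinner : ∀ m : Fin e, (∑ x : Fin d, (Finsupp.single (r m, c m) 1 : (Fin d × Fin d) →₀ ℕ) (x, j)) = if c m = j then 1 else 0 := by
    intro m
    rw [Finset.sum_eq_single (r m)]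
    · rw [Finsupp.single_apply]
      by_cases h : c m = j
      · rw [if_pos (by rw [h]), if_pos h]
      · rw [if_neg (by simp [h]), if_neg h]
    · intro x _ hx
      rw [Finsupp.single_apply, if_neg (by simp [Prod.ext_iff]; intro h _; exact absurd h.symm hx)]
    · intro h; exact absurd (Finset.mem_univ _) h
  simp only [hinner]
  by_cases h : ∃ m, c m = j
  · obtain ⟨m0, hm0⟩ := h
    rw [Finset.sum_eq_single m0]
    · rw [if_pos hm0, if_pos ⟨m0, hm0⟩]
    · intro m _ hm
      rw [if_neg fun hh => hm (hc (hh.trans hm0.symm))]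
    · intro h; exact absurd (Finset.mem_univ _) h
  · rw [if_neg h]
    refine Finset.sum_eq_zero fun m _ => ?_
    rw [if_neg fun hh => h ⟨m, hh⟩]

/-- the canonical partial-permutation exponent attached to a pair of finsets of equal card -/
noncomputable def canonExp (R C : Finset (Fin d)) (h : R.card = C.card) :
    (Fin d × Fin d) →₀ ℕ :=
  Mexp (R.orderEmbOfFin rfl) (C.orderEmbOfFin h.symm)

lemma rowSum_canonExp (R C : Finset (Fin d)) (h : R.card = C.card) (i : Fin d) :
    rowSum (canonExp R C h) i = if i ∈ R then 1 else 0 := by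
  rw [canonExp, rowSum_Mexp (R.orderEmbOfFin rfl).injective]
  congr 1
  simp only [eq_iff_iff]
  constructor
  · rintro ⟨m, rfl⟩; exact Finset.orderEmbOfFin_mem R rfl m
  · intro hi
    have := Finset.range_orderEmbOfFin R (rfl : R.card = R.card)
    have : i ∈ Set.range (R.orderEmbOfFin rfl) := by rw [this]; exact hi
    exact this

lemma colSum_canonExp (R C : Finset (Fin d)) (h : R.card = C.card) (j : Fin d) :
    colSum (canonExp R C h) j = if j ∈ C then 1 else 0 := by
  rw [canonExp, colSum_Mexp (C.orderEmbOfFin h.symm).injective]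
  congr 1
  simp only [eq_iff_iff]
  constructor
  · rintro ⟨m, rfl⟩; exact Finset.orderEmbOfFin_mem C h.symm m
  · intro hj
    have h2 := Finset.range_orderEmbOfFin C h.symm
    have : j ∈ Set.range (C.orderEmbOfFin h.symm) := by rw [h2]; exact hj
    exact this

end sums

section kill

variable {k : Type*} [CommRing k] {d : ℕ}

lemma pair_ne_fst {α β : Type*} {a c : α} {b e : β} (h : a ≠ c) : (a, b) ≠ (c, e) :=
  fun hh => h (congrArg Prod.fst hh)

lemma pair_ne_snd {α β : Type*} {a c : α} {b e : β} (h : b ≠ e) : (a, b) ≠ (c, e) :=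
  fun hh => h (congrArg Prod.snd hh)

lemma kill1 (i j : Fin d) :
    diffAction ((X (i, j))^2 : MvPolynomial (Fin d × Fin d) k) (detd k d) = 0 := by
  ext w
  rw [MvPolynomial.X_pow_eq_monomial, coeff_diffAction_monomial]
  have hz : coeff (w + Finsupp.single (i,j) 2) (detd k d) = 0 := by
    by_contra hc
    obtain ⟨σ, hσ⟩ := exists_perm_of_coeff_ne _ hc
    have h1 := permMon_le_one σ (i, j)
    rw [hσ, Finsupp.add_apply, Finsupp.single_eq_same] at h1
    omega
  rw [hz]
  simp

lemma kill2 {i j₁ j₂ : Fin d} (hj : j₁ ≠ j₂) :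
    diffAction (X (i, j₁) * X (i, j₂) : MvPolynomial (Fin d × Fin d) k) (detd k d) = 0 := by
  ext w
  rw [MvPolynomial.X, MvPolynomial.X, MvPolynomial.monomial_mul, one_mul,
    coeff_diffAction_monomial]
  have hz : coeff (w + (Finsupp.single (i, j₁) 1 + Finsupp.single (i, j₂) 1)) (detd k d) = 0 := by
    by_contra hc
    obtain ⟨σ, hσ⟩ := exists_perm_of_coeff_ne _ hc
    have e1 := DFunLike.congr_fun hσ (i, j₁)
    have e2 := DFunLike.congr_fun hσ (i, j₂)
    rw [permMon_apply, Finsupp.add_apply, Finsupp.add_apply, Finsupp.single_eq_same,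
      Finsupp.single_eq_of_ne' (pair_ne_snd (Ne.symm hj))] at e1
    rw [permMon_apply, Finsupp.add_apply, Finsupp.add_apply, Finsupp.single_eq_same,
      Finsupp.single_eq_of_ne' (pair_ne_snd hj)] at e2
    have hs1 : σ j₁ = i := by by_contra hh; rw [if_neg hh] at e1; omega
    have hs2 : σ j₂ = i := by by_contra hh; rw [if_neg hh] at e2; omega
    exact hj (σ.injective (hs1.trans hs2.symm))
  rw [hz]
  simp

lemma kill3 {i₁ i₂ j : Fin d} (hi : i₁ ≠ i₂) :
    diffAction (X (i₁, j) * X (i₂, j) : MvPolynomial (Fin d × Fin d) k) (detd k d) = 0 := by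
  ext w
  rw [MvPolynomial.X, MvPolynomial.X, MvPolynomial.monomial_mul, one_mul,
    coeff_diffAction_monomial]
  have hz : coeff (w + (Finsupp.single (i₁, j) 1 + Finsupp.single (i₂, j) 1)) (detd k d) = 0 := by
    by_contra hc
    obtain ⟨σ, hσ⟩ := exists_perm_of_coeff_ne _ hc
    have e1 := DFunLike.congr_fun hσ (i₁, j)
    have e2 := DFunLike.congr_fun hσ (i₂, j)
    rw [permMon_apply, Finsupp.add_apply, Finsupp.add_apply, Finsupp.single_eq_same,
      Finsupp.single_eq_of_ne' (pair_ne_fst (Ne.symm hi))] at e1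
    rw [permMon_apply, Finsupp.add_apply, Finsupp.add_apply, Finsupp.single_eq_same,
      Finsupp.single_eq_of_ne' (pair_ne_fst hi)] at e2
    have hs1 : σ j = i₁ := by by_contra hh; rw [if_neg hh] at e1; omega
    have hs2 : σ j = i₂ := by by_contra hh; rw [if_neg hh] at e2; omega
    exact hi (hs1.symm.trans hs2)
  rw [hz]
  simp

lemma aux4 {i k' j l : Fin d} (hik : i ≠ k') (hjl : j ≠ l) (w : (Fin d × Fin d) →₀ ℕ)
    (hne : coeff (w + (Finsupp.single (i,j) 1 + Finsupp.single (k',l) 1)) (detd k d) ≠ 0) :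
    coeff (w + (Finsupp.single (i,l) 1 + Finsupp.single (k',j) 1)) (detd k d)
      = - coeff (w + (Finsupp.single (i,j) 1 + Finsupp.single (k',l) 1)) (detd k d) ∧
    (∀ p, ((w + (Finsupp.single (i,l) 1 + Finsupp.single (k',j) 1) : (Fin d × Fin d) →₀ ℕ)) p ≤ 1) ∧
    (∀ p, ((w + (Finsupp.single (i,j) 1 + Finsupp.single (k',l) 1) : (Fin d × Fin d) →₀ ℕ)) p ≤ 1) := by
  classical
  obtain ⟨σ, hσ⟩ := exists_perm_of_coeff_ne _ hne
  have hσj : σ j = i := by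
    have e1 := DFunLike.congr_fun hσ (i, j)
    rw [permMon_apply, Finsupp.add_apply, Finsupp.add_apply, Finsupp.single_eq_same,
      Finsupp.single_eq_of_ne' (pair_ne_fst (Ne.symm hik))] at e1
    by_contra hh; rw [if_neg hh] at e1; omega
  have hσl : σ l = k' := by
    have e2 := DFunLike.congr_fun hσ (k', l)
    rw [permMon_apply, Finsupp.add_apply, Finsupp.add_apply, Finsupp.single_eq_same,
      Finsupp.single_eq_of_ne' (pair_ne_fst hik)] at e2
    by_contra hh; rw [if_neg hh] at e2; omega
  set σ' := σ * Equiv.swap j l with hσ'def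
  have hσ'j : σ' j = k' := by rw [hσ'def, Equiv.Perm.mul_apply, Equiv.swap_apply_left, hσl]
  have hσ'l : σ' l = i := by rw [hσ'def, Equiv.Perm.mul_apply, Equiv.swap_apply_right, hσj]
  have hσ'y : ∀ y, y ≠ j → y ≠ l → σ' y = σ y := fun y h1 h2 => by
    rw [hσ'def, Equiv.Perm.mul_apply, Equiv.swap_apply_of_ne_of_ne h1 h2]
  have key : permMon σ' = w + (Finsupp.single (i,l) 1 + Finsupp.single (k',j) 1) := by
    ext p
    obtain ⟨x, y⟩ := p
    have hs := DFunLike.congr_fun hσ (x, y)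
    rw [permMon_apply, Finsupp.add_apply, Finsupp.add_apply, Finsupp.single_apply,
      Finsupp.single_apply] at hs
    rw [permMon_apply, Finsupp.add_apply, Finsupp.add_apply, Finsupp.single_apply,
      Finsupp.single_apply]
    simp only [Prod.mk.injEq] at hs ⊢
    by_cases hyj : y = j
    · subst hyj
      rw [hσ'j]
      rw [hσj] at hs
      simp only [eq_self_iff_true, and_true, Ne.symm hjl, and_false, if_false] at hs ⊢
      split_ifs at hs ⊢ <;> omega
    · by_cases hyl : y = l
      · subst hyl
        rw [hσ'l]
        rw [hσl] at hs
        simp only [eq_self_iff_true, and_true, hjl, and_false, if_false] at hs ⊢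
        split_ifs at hs ⊢ <;> omega
      · rw [hσ'y y hyj hyl]
        simp only [Ne.symm hyj, Ne.symm hyl, and_false, if_false] at hs ⊢
        split_ifs at hs ⊢ <;> omega
  refine ⟨?_, ?_, ?_⟩
  · rw [← key, ← hσ, coeff_detd_permMon, coeff_detd_permMon]
    have hsgn : Equiv.Perm.sign σ' = - Equiv.Perm.sign σ := by
      rw [hσ'def, Equiv.Perm.sign_mul, Equiv.Perm.sign_swap hjl, mul_neg_one]
    rw [hsgn]
    push_cast
    ring
  · intro p; rw [← key]; exact permMon_le_one σ' p
  · intro p; rw [← hσ]; exact permMon_le_one σ p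

lemma kill4 {i k' j l : Fin d} (hik : i ≠ k') (hjl : j ≠ l) :
    diffAction (X (i, j) * X (k', l) + X (i, l) * X (k', j) :
      MvPolynomial (Fin d × Fin d) k) (detd k d) = 0 := by
  ext w
  rw [diffAction_add_left, coeff_add, MvPolynomial.X, MvPolynomial.X, MvPolynomial.X,
    MvPolynomial.X, MvPolynomial.monomial_mul, MvPolynomial.monomial_mul, one_mul,
    coeff_diffAction_monomial, coeff_diffAction_monomial, MvPolynomial.coeff_zero]
  by_cases h1 : coeff (w + (Finsupp.single (i,j) 1 + Finsupp.single (k',l) 1)) (detd k d) = 0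
  · by_cases h2 : coeff (w + (Finsupp.single (i,l) 1 + Finsupp.single (k',j) 1)) (detd k d) = 0
    · rw [h1, h2]; simp
    · obtain ⟨hco, hb1, hb2⟩ := aux4 hik (Ne.symm hjl) w h2
      rw [dN_eq_one le_add_self (fun p => hb1 p), dN_eq_one le_add_self (fun p => hb2 p), hco]
      push_cast
      ring
  · obtain ⟨hco, hb2, hb1⟩ := aux4 hik hjl w h1
    rw [dN_eq_one le_add_self (fun p => hb1 p), dN_eq_one le_add_self (fun p => hb2 p), hco]
    push_cast
    ring

end kill

section easydir

variable (k : Type*) [CommRing k] (d : ℕ)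

/-- the generating set of quadrics -/
def genSet : Set (MvPolynomial (Fin d × Fin d) k) :=
  {p | ∃ i j : Fin d, p = X (i, j) ^ 2} ∪
  {p | ∃ (i j₁ j₂ : Fin d), j₁ ≠ j₂ ∧ p = X (i, j₁) * X (i, j₂)} ∪
  {p | ∃ (i₁ i₂ j : Fin d), i₁ ≠ i₂ ∧ p = X (i₁, j) * X (i₂, j)} ∪
  {p | ∃ (i k' j l : Fin d), i ≠ k' ∧ j ≠ l ∧
     p = X (i, j) * X (k', l) + X (i, l) * X (k', j)}

variable {k d}

lemma mem_kill {g : MvPolynomial (Fin d × Fin d) k} (hg : g ∈ genSet k d) :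
    diffAction g (detd k d) = 0 := by
  rcases hg with ((⟨i, j, rfl⟩ | ⟨i, j₁, j₂, hne, rfl⟩) | ⟨i₁, i₂, j, hne, rfl⟩) |
    ⟨i, k', j, l, h1, h2, rfl⟩
  · exact kill1 i j
  · exact kill2 hne
  · exact kill3 hne
  · exact kill4 h1 h2

lemma span_kill {θ : MvPolynomial (Fin d × Fin d) k} (hθ : θ ∈ Ideal.span (genSet k d)) :
    diffAction θ (detd k d) = 0 := by
  refine Submodule.span_induction (fun g hg => mem_kill hg) (diffAction_zero_left _)
    (fun x y _ _ hx hy => by rw [diffAction_add_left, hx, hy, add_zero])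
    (fun a x _ hx => ?_) hθ
  rw [smul_eq_mul, diffAction_mul, hx, diffAction_zero_right]

lemma swap_step {e : ℕ} {r c : Fin e → Fin d} (hr : Function.Injective r)
    (hc : Function.Injective c) {x y : Fin e} (hxy : x ≠ y) :
    (monomial (Mexp r c) (1:k)) + monomial (Mexp r (c ∘ Equiv.swap x y)) 1 ∈
      Ideal.span (genSet k d) := by
  classical
  set Rest : (Fin d × Fin d) →₀ ℕ :=
    ∑ m ∈ Finset.univ \ ({x, y} : Finset (Fin e)), Finsupp.single (r m, c m) 1 with hRest
  have hsub : ({x, y} : Finset (Fin e)) ⊆ Finset.univ := Finset.subset_univ _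
  have hM1 : Mexp r c = Finsupp.single (r x, c x) 1 + Finsupp.single (r y, c y) 1 + Rest := by
    rw [Mexp, ← Finset.sum_sdiff hsub, Finset.sum_pair hxy, hRest]
    abel
  have hM2 : Mexp r (c ∘ Equiv.swap x y) =
      Finsupp.single (r x, c y) 1 + Finsupp.single (r y, c x) 1 + Rest := by
    rw [Mexp, ← Finset.sum_sdiff hsub, Finset.sum_pair hxy]
    have h1 : (c ∘ Equiv.swap x y) x = c y := by simp [Equiv.swap_apply_left]
    have h2 : (c ∘ Equiv.swap x y) y = c x := by simp [Equiv.swap_apply_right]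
    have h3 : ∑ m ∈ Finset.univ \ ({x, y} : Finset (Fin e)),
        Finsupp.single (r m, (c ∘ Equiv.swap x y) m) 1 = Rest := by
      rw [hRest]
      refine Finset.sum_congr rfl fun m hm => ?_
      rw [Finset.mem_sdiff, Finset.mem_insert, Finset.mem_singleton] at hm
      push_neg at hm
      have := Equiv.swap_apply_of_ne_of_ne hm.2.1 hm.2.2
      simp [this]
    rw [h1, h2, h3]
    abel
  have hfac : (monomial (Mexp r c) (1:k)) + monomial (Mexp r (c ∘ Equiv.swap x y)) 1 =
      (X (r x, c x) * X (r y, c y) + X (r x, c y) * X (r y, c x)) * monomial Rest 1 := by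
    rw [hM1, hM2, MvPolynomial.X, MvPolynomial.X, MvPolynomial.X, MvPolynomial.X,
      MvPolynomial.monomial_mul, MvPolynomial.monomial_mul, add_mul,
      MvPolynomial.monomial_mul, MvPolynomial.monomial_mul]
    simp [one_mul]
  rw [hfac]
  refine Ideal.mul_mem_right _ _ (Ideal.subset_span ?_)
  refine Or.inr ⟨r x, r y, c x, c y, fun hh => hxy (hr hh), fun hh => hxy (hc hh), rfl⟩

lemma perm_reduce {e : ℕ} {r : Fin e → Fin d} (hr : Function.Injective r)
    (π : Equiv.Perm (Fin e)) :
    ∀ c : Fin e → Fin d, Function.Injective c →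
      monomial (Mexp r (c ∘ π)) (1:k) -
        ((Equiv.Perm.sign π : ℤ) : k) • monomial (Mexp r c) 1 ∈ Ideal.span (genSet k d) := by
  refine Equiv.Perm.swap_induction_on π ?_ ?_
  · intro c hc
    have h1 : ((Equiv.Perm.sign (1 : Equiv.Perm (Fin e)) : ℤ) : k) = 1 := by simp
    have h2 : c ∘ ⇑(1 : Equiv.Perm (Fin e)) = c := by
      funext m; rfl
    rw [h1, one_smul, h2, sub_self]
    exact zero_mem _
  · intro π' x y hxy IH c hc
    have hcomp : c ∘ ⇑(Equiv.swap x y * π') = (c ∘ ⇑(Equiv.swap x y)) ∘ ⇑π' := by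
      funext m; rfl
    set s' : k := ((Equiv.Perm.sign π' : ℤ) : k) with hs'
    have hsgn : ((Equiv.Perm.sign (Equiv.swap x y * π') : ℤ) : k) = -s' := by
      rw [hs', Equiv.Perm.sign_mul, Equiv.Perm.sign_swap hxy]
      push_cast
      ring
    have h1 := IH (c ∘ ⇑(Equiv.swap x y)) (hc.comp (Equiv.swap x y).injective)
    have h2 : (monomial (Mexp r c) (1:k)) + monomial (Mexp r (c ∘ ⇑(Equiv.swap x y))) 1 ∈
        Ideal.span (genSet k d) := swap_step hr hc hxy
    have h3 : s' • ((monomial (Mexp r c) (1:k)) + monomial (Mexp r (c ∘ ⇑(Equiv.swap x y))) 1) ∈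
        Ideal.span (genSet k d) := by
      rw [MvPolynomial.smul_eq_C_mul]
      exact Ideal.mul_mem_left _ _ h2
    have key : monomial (Mexp r (c ∘ ⇑(Equiv.swap x y * π'))) (1:k) -
        ((Equiv.Perm.sign (Equiv.swap x y * π') : ℤ) : k) • monomial (Mexp r c) 1 =
        (monomial (Mexp r ((c ∘ ⇑(Equiv.swap x y)) ∘ ⇑π')) 1 -
          s' • monomial (Mexp r (c ∘ ⇑(Equiv.swap x y))) 1) +
        s' • ((monomial (Mexp r c) (1:k)) + monomial (Mexp r (c ∘ ⇑(Equiv.swap x y))) 1) := by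
      rw [hcomp, hsgn, neg_smul, sub_neg_eq_add, smul_add]
      abel
    rw [key]
    exact Ideal.add_mem _ h1 h3

end easydir

section reduction

variable {k : Type*} [CommRing k] {d : ℕ}

lemma exists_perm_comp {e : ℕ} (r c : Fin e → Fin d) (hr : Function.Injective r)
    (hc : Function.Injective c) : ∃ σ : Equiv.Perm (Fin d), ∀ m, σ (c m) = r m := by
  classical
  have hcard : Fintype.card {x : Fin d // x ∉ Set.range c} =
      Fintype.card {x : Fin d // x ∉ Set.range r} := by
    have h1 : Fintype.card {x : Fin d // x ∈ Set.range c} = e :=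
      (Fintype.card_congr (Equiv.ofInjective c hc).symm).trans (Fintype.card_fin e)
    have h2 : Fintype.card {x : Fin d // x ∈ Set.range r} = e :=
      (Fintype.card_congr (Equiv.ofInjective r hr).symm).trans (Fintype.card_fin e)
    rw [Fintype.card_subtype_compl, Fintype.card_subtype_compl, h1, h2]
  obtain ⟨g⟩ := Fintype.card_eq.mp hcard
  let f : {x : Fin d // x ∈ Set.range c} ≃ {x : Fin d // x ∈ Set.range r} :=
    (Equiv.ofInjective c hc).symm.trans (Equiv.ofInjective r hr)
  refine ⟨(Equiv.sumCompl (· ∈ Set.range c)).symm.trans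
    ((Equiv.sumCongr f g).trans (Equiv.sumCompl (· ∈ Set.range r))), fun m => ?_⟩
  have h3 : (Equiv.sumCompl (· ∈ Set.range c)).symm (c m) = Sum.inl ⟨c m, ⟨m, rfl⟩⟩ :=
    Equiv.sumCompl_symm_apply_of_pos ⟨m, rfl⟩
  simp only [Equiv.trans_apply, h3, Equiv.sumCongr_apply, Sum.map_inl]
  have h4 : f ⟨c m, ⟨m, rfl⟩⟩ = ⟨r m, ⟨m, rfl⟩⟩ := by
    show (Equiv.ofInjective r hr) ((Equiv.ofInjective c hc).symm ⟨c m, ⟨m, rfl⟩⟩) = _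
    rw [Equiv.ofInjective_symm_apply]
    rfl
  rw [h4]
  exact Equiv.sumCompl_apply_inl _

lemma canonExp_eq {R C : Finset (Fin d)} {e : ℕ} (hRe : R.card = e) (hCe : C.card = e)
    (h : R.card = C.card) :
    Mexp (⇑(R.orderEmbOfFin hRe)) (⇑(C.orderEmbOfFin hCe)) = canonExp R C h := by
  subst hRe
  rfl

variable (k d) in
/-- the canonical monomial family indexed by pairs of finsets -/
noncomputable def canonFam : Finset (Fin d) × Finset (Fin d) → MvPolynomial (Fin d × Fin d) k :=
  fun RC => if h : RC.1.card = RC.2.card then monomial (canonExp RC.1 RC.2 h) 1 else 0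

variable (k d) in
/-- span of the canonical monomials -/
noncomputable def Vsub : Submodule k (MvPolynomial (Fin d × Fin d) k) :=
  Submodule.span k (Set.range (canonFam k d))

lemma monomial_mem (a : (Fin d × Fin d) →₀ ℕ) :
    (monomial a (1:k)) ∈
      (Ideal.span (genSet k d)).restrictScalars k ⊔ Vsub k d := by
  classical
  by_cases hs2 : ∃ p, 2 ≤ a p
  · obtain ⟨⟨i, j⟩, hp⟩ := hs2
    have hle : Finsupp.single (i,j) 2 ≤ a := Finsupp.single_le_iff.mpr hp
    have hfac : monomial a (1:k) = (X (i,j)^2) * monomial (a - Finsupp.single (i,j) 2) 1 := by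
      rw [MvPolynomial.X_pow_eq_monomial, MvPolynomial.monomial_mul, one_mul,
        add_tsub_cancel_of_le hle]
    rw [hfac]
    refine Submodule.mem_sup_left ?_
    rw [Submodule.restrictScalars_mem]
    exact Ideal.mul_mem_right _ _ (Ideal.subset_span (Or.inl (Or.inl (Or.inl ⟨i, j, rfl⟩))))
  · have hsq : ∀ p, a p ≤ 1 := by
      push_neg at hs2
      intro p; have := hs2 p; omega
    by_cases hrow : ∀ i j1 j2 : Fin d, a (i,j1) ≠ 0 → a (i,j2) ≠ 0 → j1 = j2
    · by_cases hcol : ∀ j i1 i2 : Fin d, a (i1,j) ≠ 0 → a (i2,j) ≠ 0 → i1 = i2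
      · -- partial permutation case
        set S := a.support with hS
        set e := S.card with he
        set q : Fin e → Fin d × Fin d := fun m => ↑(S.equivFin.symm m) with hqdef
        have hqmem : ∀ m, q m ∈ S := fun m => (S.equivFin.symm m).2
        have hqinj : Function.Injective q :=
          fun m m' hmm => S.equivFin.symm.injective (Subtype.coe_injective hmm)
        set r₀ : Fin e → Fin d := fun m => (q m).1 with hr₀def
        set c₀ : Fin e → Fin d := fun m => (q m).2 with hc₀def
        have hane : ∀ m, a (r₀ m, c₀ m) ≠ 0 := fun m => by
          have := hqmem m
          rw [hS, Finsupp.mem_support_iff] at this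
          rwa [hr₀def, hc₀def, Prod.mk.eta]
        have hr₀ : Function.Injective r₀ := by
          intro m m' hmm
          apply hqinj
          have h2 : c₀ m = c₀ m' := by
            refine hrow (r₀ m) (c₀ m) (c₀ m') (hane m) ?_
            rw [hmm]; exact hane m'
          rw [hr₀def] at hmm; rw [hc₀def] at h2
          exact Prod.ext hmm h2
        have hc₀ : Function.Injective c₀ := by
          intro m m' hmm
          apply hqinj
          have h2 : r₀ m = r₀ m' := by
            refine hcol (c₀ m) (r₀ m) (r₀ m') (hane m) ?_
            rw [hmm]; exact hane m'
          rw [hc₀def] at hmm; rw [hr₀def] at h2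
          exact Prod.ext h2 hmm
        have hA : a = Mexp r₀ c₀ := by
          have h1 : a = ∑ p ∈ S, Finsupp.single p 1 := by
            conv_lhs => rw [← Finsupp.sum_single a]
            rw [Finsupp.sum]
            refine Finset.sum_congr rfl fun p hp => ?_
            have : a p = 1 := by
              have h2 := hsq p
              have h3 := Finsupp.mem_support_iff.mp hp
              omega
            rw [this]
          have h2 : ∑ p ∈ S, (Finsupp.single p 1 : (Fin d × Fin d) →₀ ℕ)
              = ∑ m : Fin e, Finsupp.single (q m) 1 := by
            rw [← Finset.sum_attach S (fun p => (Finsupp.single p 1 : (Fin d × Fin d) →₀ ℕ))]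
            exact (Equiv.sum_comp S.equivFin.symm
              (fun x : S => (Finsupp.single (x : Fin d × Fin d) 1 : (Fin d × Fin d) →₀ ℕ))).symm
          rw [h1, h2, Mexp]
        set τ := Tuple.sort r₀ with hτ
        set r : Fin e → Fin d := r₀ ∘ ⇑τ with hrdef
        have hrinj : Function.Injective r := hr₀.comp τ.injective
        have hrsm : StrictMono r := (Tuple.monotone_sort r₀).strictMono_of_injective hrinj
        set c₁ : Fin e → Fin d := c₀ ∘ ⇑τ with hc₁def
        have hc₁ : Function.Injective c₁ := hc₀.comp τ.injective
        have hM1 : Mexp r₀ c₀ = Mexp r c₁ := by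
          rw [Mexp, Mexp]
          exact (Equiv.sum_comp τ
            (fun m => (Finsupp.single (r₀ m, c₀ m) 1 : (Fin d × Fin d) →₀ ℕ))).symm
        set π := Tuple.sort c₁ with hπ
        set c : Fin e → Fin d := c₁ ∘ ⇑π with hcdef
        have hcinj : Function.Injective c := hc₁.comp π.injective
        have hcsm : StrictMono c := (Tuple.monotone_sort c₁).strictMono_of_injective hcinj
        have hc1eq : c ∘ ⇑π⁻¹ = c₁ := by
          funext m
          show c₁ (π (π⁻¹ m)) = c₁ m
          rw [show π (π⁻¹ m) = m from π.apply_symm_apply m]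
        have key := perm_reduce (k := k) hrinj π⁻¹ c hcinj
        rw [hc1eq] at key
        set R : Finset (Fin d) := Finset.image r Finset.univ with hR
        set C : Finset (Fin d) := Finset.image c Finset.univ with hC
        have hRe : R.card = e := by
          rw [hR, Finset.card_image_of_injective _ hrinj, Finset.card_univ, Fintype.card_fin]
        have hCe : C.card = e := by
          rw [hC, Finset.card_image_of_injective _ hcinj, Finset.card_univ, Fintype.card_fin]
        have hRC : R.card = C.card := hRe.trans hCe.symm
        have hrEmb : r = ⇑(R.orderEmbOfFin hRe) :=
          Finset.orderEmbOfFin_unique hRe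
            (fun m => Finset.mem_image.mpr ⟨m, Finset.mem_univ m, rfl⟩) hrsm
        have hcEmb : c = ⇑(C.orderEmbOfFin hCe) :=
          Finset.orderEmbOfFin_unique hCe
            (fun m => Finset.mem_image.mpr ⟨m, Finset.mem_univ m, rfl⟩) hcsm
        have hcanon : Mexp r c = canonExp R C hRC := by
          rw [hrEmb, hcEmb]
          exact canonExp_eq hRe hCe hRC
        have hfam : canonFam k d (R, C) = monomial (canonExp R C hRC) 1 := by
          rw [canonFam]
          exact dif_pos hRC
        have hsplit : monomial a (1:k) =
            (monomial (Mexp r c₁) 1 -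
              ((Equiv.Perm.sign π⁻¹ : ℤ) : k) • monomial (Mexp r c) 1) +
            ((Equiv.Perm.sign π⁻¹ : ℤ) : k) • monomial (Mexp r c) 1 := by
          rw [hA, hM1]
          abel
        rw [hsplit]
        refine Submodule.add_mem _ (Submodule.mem_sup_left ?_) (Submodule.mem_sup_right ?_)
        · rw [Submodule.restrictScalars_mem]
          exact key
        · rw [hcanon, ← hfam]
          exact Submodule.smul_mem _ _ (Submodule.subset_span ⟨(R, C), rfl⟩)
      · -- two in same column
        push_neg at hcol
        obtain ⟨j, i1, i2, h1, h2, hne⟩ := hcol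
        set s := Finsupp.single ((i1, j) : Fin d × Fin d) 1 + Finsupp.single (i2, j) 1 with hs
        have hle : s ≤ a := by
          rw [Finsupp.le_def]
          intro p
          rw [hs, Finsupp.add_apply, Finsupp.single_apply, Finsupp.single_apply]
          by_cases hp1 : ((i1, j) : Fin d × Fin d) = p
          · subst hp1
            rw [if_pos rfl, if_neg (pair_ne_fst (Ne.symm hne))]
            omega
          · rw [if_neg hp1]
            by_cases hp2 : ((i2, j) : Fin d × Fin d) = p
            · subst hp2
              rw [if_pos rfl]
              omega
            · rw [if_neg hp2]
              omega
        have hfac : monomial a (1:k) = (X (i1,j) * X (i2,j)) * monomial (a - s) 1 := by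
          conv_rhs => rw [MvPolynomial.X, MvPolynomial.X, MvPolynomial.monomial_mul, one_mul,
            MvPolynomial.monomial_mul, one_mul]
          congr 1
          rw [← hs, add_tsub_cancel_of_le hle]
        rw [hfac]
        refine Submodule.mem_sup_left ?_
        rw [Submodule.restrictScalars_mem]
        exact Ideal.mul_mem_right _ _
          (Ideal.subset_span (Or.inl (Or.inr ⟨i1, i2, j, hne, rfl⟩)))
    · -- two in same row
      push_neg at hrow
      obtain ⟨i, j1, j2, h1, h2, hne⟩ := hrow
      set s := Finsupp.single ((i, j1) : Fin d × Fin d) 1 + Finsupp.single (i, j2) 1 with hs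
      have hle : s ≤ a := by
        rw [Finsupp.le_def]
        intro p
        rw [hs, Finsupp.add_apply, Finsupp.single_apply, Finsupp.single_apply]
        by_cases hp1 : ((i, j1) : Fin d × Fin d) = p
        · subst hp1
          rw [if_pos rfl, if_neg (pair_ne_snd (Ne.symm hne))]
          omega
        · rw [if_neg hp1]
          by_cases hp2 : ((i, j2) : Fin d × Fin d) = p
          · subst hp2
            rw [if_pos rfl]
            omega
          · rw [if_neg hp2]
            omega
      have hfac : monomial a (1:k) = (X (i,j1) * X (i,j2)) * monomial (a - s) 1 := by
        conv_rhs => rw [MvPolynomial.X, MvPolynomial.X, MvPolynomial.monomial_mul, one_mul,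
          MvPolynomial.monomial_mul, one_mul]
        congr 1
        rw [← hs, add_tsub_cancel_of_le hle]
      rw [hfac]
      refine Submodule.mem_sup_left ?_
      rw [Submodule.restrictScalars_mem]
      exact Ideal.mul_mem_right _ _
        (Ideal.subset_span (Or.inl (Or.inl (Or.inr ⟨i, j1, j2, hne, rfl⟩))))

lemma theta_mem (θ : MvPolynomial (Fin d × Fin d) k) :
    θ ∈ (Ideal.span (genSet k d)).restrictScalars k ⊔ Vsub k d := by
  rw [← MvPolynomial.support_sum_monomial_coeff θ]
  refine Submodule.sum_mem _ fun a _ => ?_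
  have h1 : (monomial a (coeff a θ) : MvPolynomial (Fin d × Fin d) k)
      = (coeff a θ) • monomial a (1:k) := by
    rw [MvPolynomial.smul_monomial, smul_eq_mul, mul_one]
  rw [h1]
  exact Submodule.smul_mem _ _ (monomial_mem a)

end reduction


section indep

variable {k : Type*} [Field k] {d : ℕ}

lemma sign_cast_ne_zero (σ : Equiv.Perm (Fin d)) : ((Equiv.Perm.sign σ : ℤ) : k) ≠ 0 := by
  rcases Int.units_eq_one_or (Equiv.Perm.sign σ) with h | h <;> rw [h] <;> norm_num

lemma indep {v : MvPolynomial (Fin d × Fin d) k}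
    (hv : v ∈ Vsub k d) (h0 : diffAction v (detd k d) = 0) : v = 0 := by
  classical
  rw [Vsub] at hv
  obtain ⟨cf, hcf⟩ := (Submodule.mem_span_range_iff_exists_fun k).mp hv
  suffices hall : ∀ RC : Finset (Fin d) × Finset (Fin d), cf RC • canonFam k d RC = 0 by
    rw [← hcf]
    exact Finset.sum_eq_zero fun i _ => hall i
  rintro ⟨R, C⟩
  by_cases hRC : R.card = C.card
  swap
  · have : canonFam k d (R, C) = 0 := by simp only [canonFam]; rw [dif_neg hRC]
    rw [this, smul_zero]
  · suffices hc0 : cf (R, C) = 0 by rw [hc0, zero_smul]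
    have hremb : Function.Injective ⇑(R.orderEmbOfFin (rfl : R.card = R.card)) :=
      (R.orderEmbOfFin rfl).injective
    have hcemb : Function.Injective ⇑(C.orderEmbOfFin hRC.symm) :=
      (C.orderEmbOfFin hRC.symm).injective
    obtain ⟨σ, hσc⟩ := exists_perm_comp _ _ hremb hcemb
    set aR := canonExp R C hRC with haR
    have hle : aR ≤ permMon σ := by
      rw [Finsupp.le_def]
      intro p
      rw [haR, canonExp, Mexp_apply hremb]
      split_ifs with hex
      · obtain ⟨m, rfl⟩ := hex
        rw [permMon_apply, if_pos (hσc m)]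
      · exact Nat.zero_le _
    set w := permMon σ - aR with hw
    have hwa : w + aR = permMon σ := by rw [hw, tsub_add_cancel_of_le hle]
    have hexp : (0:k) = ∑ RC' : Finset (Fin d) × Finset (Fin d),
        cf RC' * coeff w (diffAction (canonFam k d RC') (detd k d)) := by
      have h1 : diffAction v (detd k d)
          = ∑ i, cf i • diffAction (canonFam k d i) (detd k d) := by
        rw [← hcf, ← dAL_apply, map_sum]
        exact Finset.sum_congr rfl fun i _ => by rw [map_smul, dAL_apply]
      calc (0:k) = coeff w (diffAction v (detd k d)) := by rw [h0, MvPolynomial.coeff_zero]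
        _ = _ := by
            rw [h1, MvPolynomial.coeff_sum]
            exact Finset.sum_congr rfl fun i _ => by
              rw [MvPolynomial.coeff_smul, smul_eq_mul]
    have hzero : ∀ RC' : Finset (Fin d) × Finset (Fin d), RC' ≠ (R, C) →
        cf RC' * coeff w (diffAction (canonFam k d RC') (detd k d)) = 0 := by
      rintro ⟨R', C'⟩ hne
      by_cases hRC' : R'.card = C'.card
      · have hfam : canonFam k d (R', C') = monomial (canonExp R' C' hRC') 1 := by
          simp only [canonFam]; rw [dif_pos hRC']
        rw [hfam, coeff_diffAction_monomial, one_mul]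
        have hcz : coeff (w + canonExp R' C' hRC') (detd k d) = 0 := by
          by_contra hcc
          obtain ⟨σ'', hσ''⟩ := exists_perm_of_coeff_ne _ hcc
          have hRR : R' = R := by
            ext i
            have e1 : rowSum (w + canonExp R' C' hRC') i = 1 := by
              rw [← hσ'', rowSum_permMon]
            have e2 : rowSum (w + aR) i = 1 := by rw [hwa, rowSum_permMon]
            rw [rowSum_add, rowSum_canonExp] at e1
            rw [rowSum_add, haR, rowSum_canonExp] at e2
            by_cases h1 : i ∈ R' <;> by_cases h2 : i ∈ R <;>
              simp only [h1, h2, if_true, if_false, iff_true, iff_false] <;>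
              simp [h1, h2] at e1 e2 <;> omega
          have hCC : C' = C := by
            ext j
            have e1 : colSum (w + canonExp R' C' hRC') j = 1 := by
              rw [← hσ'', colSum_permMon]
            have e2 : colSum (w + aR) j = 1 := by rw [hwa, colSum_permMon]
            rw [colSum_add, colSum_canonExp] at e1
            rw [colSum_add, haR, colSum_canonExp] at e2
            by_cases h1 : j ∈ C' <;> by_cases h2 : j ∈ C <;>
              simp only [h1, h2, if_true, if_false, iff_true, iff_false] <;>
              simp [h1, h2] at e1 e2 <;> omega
          exact hne (by rw [hRR, hCC])
        rw [hcz]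
        ring
      · have : canonFam k d (R', C') = 0 := by simp only [canonFam]; rw [dif_neg hRC']
        rw [this, diffAction_zero_left, MvPolynomial.coeff_zero]
        ring
    rw [Finset.sum_eq_single (R, C) (fun b _ hb => hzero b hb)
      (fun hmem => absurd (Finset.mem_univ _) hmem)] at hexp
    have hfam : canonFam k d (R, C) = monomial aR 1 := by
      simp only [canonFam]; rw [dif_pos hRC]
    rw [hfam, coeff_diffAction_monomial, one_mul, hwa, coeff_detd_permMon,
      dN_eq_one hle (permMon_le_one σ), Nat.cast_one, mul_one] at hexp
    rcases mul_eq_zero.mp hexp.symm with h | h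
    · exact h
    · exact absurd h (sign_cast_ne_zero σ)

end indep


/-- Shafiei's theorem: for `d ≥ 2`, over a field of characteristic 0, the apolar ideal of the
generic `d × d` determinant is generated by the quadrics: squares of variables, products of two
variables from the same row, products of two variables from the same column, and `2 × 2`
permanents of the matrix of dual variables. -/
theorem det_apolar_ideal_gens (k : Type*) [Field k] [CharZero k] (d : ℕ) (hd : 2 ≤ d) :
    ∀ θ : MvPolynomial (Fin d × Fin d) k,
      diffAction θ (detd k d) = 0 ↔
        θ ∈ Ideal.span
          ({p | ∃ i j : Fin d, p = X (i, j) ^ 2} ∪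
           {p | ∃ (i j₁ j₂ : Fin d), j₁ ≠ j₂ ∧ p = X (i, j₁) * X (i, j₂)} ∪
           {p | ∃ (i₁ i₂ j : Fin d), i₁ ≠ i₂ ∧ p = X (i₁, j) * X (i₂, j)} ∪
           {p | ∃ (i k' j l : Fin d), i ≠ k' ∧ j ≠ l ∧
              p = X (i, j) * X (k', l) + X (i, l) * X (k', j)}) := by
  intro θ
  show diffAction θ (detd k d) = 0 ↔ θ ∈ Ideal.span (genSet k d)
  constructor
  · intro h
    obtain ⟨ι, hι, v, hv, hsum⟩ := Submodule.mem_sup.mp (theta_mem θ)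
    rw [Submodule.restrictScalars_mem] at hι
    have hι0 : diffAction ι (detd k d) = 0 := span_kill hι
    have hveq : v = θ - ι := by rw [← hsum]; ring
    have hv0 : diffAction v (detd k d) = 0 := by
      rw [hveq, show diffAction (θ - ι) (detd k d) = dAL (detd k d) (θ - ι) from rfl,
        map_sub, dAL_apply, dAL_apply, h, hι0, sub_zero]
    have := indep hv hv0
    rw [this, add_zero] at hsum
    rw [← hsum]
    exact hι
  · exact span_kill
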